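/- Work in the field RatFunc ℂ of rational functions over ℂ in the variable X. Fix an integer r. Let a₀ ∈ LaurentPolynomial ℂ and let a : ℤ × ℕ → LaurentPolynomial ℂ be finitely supported with a (k,p) = 0 unless k ≥ r and p ≥ 1. Suppose that for every integer n with n ≥ −(r+1), the identity a₀ + ∑_{(k,p)} a (k,p) · ((X^(n+k+1) − X^(-(n+k+1))) / (X^(n+k+2) − X^(-(n+k+2))))^p = 0 holds in RatFunc ℂ, where Laurent polynomials in T are mapped into RatFunc ℂ by T ↦ X. Then a₀ = 0 and a (k,p) = 0 for all (k,p). (This is the linear-independence statement established in the proof of Proposition 6.8: no nontrivial ℂ[q,q⁻¹]-linear combination of 1 and the powers ([n+k+1]/[n+k+2])^p can vanish for all n > −(r+2).) -/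

import Mathlib

namespace BoxAux
open Polynomial

variable {F : Type*} [Field F]

noncomputable def mdeg (S : Finset (ℤ × ℕ)) (k : ℤ) : ℕ :=
  (S.filter (fun kp => kp.1 = k)).sup Prod.snd

lemma le_mdeg {S : Finset (ℤ × ℕ)} {kp : ℤ × ℕ} (h : kp ∈ S) : kp.2 ≤ mdeg S kp.1 :=
  Finset.le_sup (Finset.mem_filter.2 ⟨h, rfl⟩)

noncomputable def auxQ (x : F) (c₀ : F) (S : Finset (ℤ × ℕ)) (c : ℤ × ℕ → F) : Polynomial F :=
  C c₀ * ∏ k ∈ S.image Prod.fst, (C (x ^ (2*(k+2))) * X - 1) ^ (mdeg S k)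
  + ∑ kp ∈ S, C (c kp * x ^ kp.2) *
      ((C (x ^ (2*(kp.1+1))) * X - 1) ^ kp.2 *
       (C (x ^ (2*(kp.1+2))) * X - 1) ^ (mdeg S kp.1 - kp.2) *
       ∏ k ∈ (S.image Prod.fst).erase kp.1, (C (x ^ (2*(k+2))) * X - 1) ^ (mdeg S k))

variable {x : F}

lemma ratio_eq (hx0 : x ≠ 0) (hx1 : ∀ m : ℤ, m ≠ 0 → x ^ m ≠ 1)
    (M : ℤ) (hM : 0 ≤ M) :
    (x ^ M - x ^ (-M)) / (x ^ (M+1) - x ^ (-(M+1)))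
      = x * (x ^ (2*M) - 1) / (x ^ (2*(M+1)) - 1) := by
  have hnum : x ^ M - x ^ (-M) = x ^ (-M) * (x ^ (2*M) - 1) := by
    rw [mul_sub, mul_one, ← zpow_add₀ hx0]
    congr 2
    ring
  have hden : x ^ (M+1) - x ^ (-(M+1)) = x ^ (-(M+1)) * (x ^ (2*(M+1)) - 1) := by
    rw [mul_sub, mul_one, ← zpow_add₀ hx0]
    congr 2
    ring
  have hxM : x ^ (-M) = x * x ^ (-(M+1)) := by
    rw [← zpow_one_add₀ hx0]
    congr 1
    ring
  rw [hnum, hden, hxM, mul_assoc, mul_left_comm,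
    mul_div_mul_left _ _ (zpow_ne_zero _ hx0), mul_div_assoc]

lemma ratio_pow (hx0 : x ≠ 0) (hx1 : ∀ m : ℤ, m ≠ 0 → x ^ m ≠ 1)
    (M : ℤ) (hM : 0 ≤ M) (p mk : ℕ) (hpm : p ≤ mk) :
    ((x ^ M - x ^ (-M)) / (x ^ (M+1) - x ^ (-(M+1)))) ^ p * (x ^ (2*(M+1)) - 1) ^ mk
      = x ^ p * (x ^ (2*M) - 1) ^ p * (x ^ (2*(M+1)) - 1) ^ (mk - p) := by
  have hB : x ^ (2*(M+1)) - 1 ≠ 0 :=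
    sub_ne_zero.2 (hx1 _ (by omega))
  rw [ratio_eq hx0 hx1 M hM, div_pow, mul_pow, div_mul_eq_mul_div,
    div_eq_iff (pow_ne_zero _ hB), mul_assoc, mul_assoc, ← pow_add,
    show mk - p + p = mk from by omega, ← mul_assoc]


lemma auxQ_eval (hx0 : x ≠ 0) (hx1 : ∀ m : ℤ, m ≠ 0 → x ^ m ≠ 1)
    (c₀ : F) (S : Finset (ℤ × ℕ)) (c : ℤ × ℕ → F)
    (n : ℤ) (hn : ∀ kp ∈ S, 0 ≤ n + kp.1 + 1) :
    (auxQ x c₀ S c).eval (x ^ (2*n)) =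
      (c₀ + ∑ kp ∈ S, c kp *
        ((x ^ (n + kp.1 + 1) - x ^ (-(n + kp.1 + 1))) /
          (x ^ (n + kp.1 + 2) - x ^ (-(n + kp.1 + 2)))) ^ kp.2)
      * ∏ k ∈ S.image Prod.fst, (x ^ (2*(n+(k+2))) - 1) ^ (mdeg S k) := by
  have hz : ∀ j : ℤ, x ^ (2*j) * x ^ (2*n) = x ^ (2*(n+j)) := fun j => by
    rw [← zpow_add₀ hx0]; congr 1; ring
  simp only [auxQ, eval_add, eval_mul, eval_pow, eval_sub, eval_one, eval_C, eval_X,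
    eval_prod, eval_finset_sum, hz]
  rw [add_mul, Finset.sum_mul]
  congr 1
  apply Finset.sum_congr rfl
  intro kp hkp
  have hkT : kp.1 ∈ S.image Prod.fst := Finset.mem_image.2 ⟨kp, hkp, rfl⟩
  rw [← Finset.mul_prod_erase _ _ hkT]
  set M : ℤ := n + kp.1 + 1 with hMdef
  have hM : 0 ≤ M := hn kp hkp
  have e1 : n + kp.1 + 2 = M + 1 := by rw [hMdef]; ring
  have e2 : 2*(n+(kp.1+1)) = 2*M := by rw [hMdef]; ring
  have e3 : 2*(n+(kp.1+2)) = 2*(M+1) := by rw [hMdef]; ring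
  rw [e1, e2, e3]
  rw [show c kp * ((x ^ M - x ^ (-M)) / (x ^ (M+1) - x ^ (-(M+1)))) ^ kp.2 *
      ((x ^ (2*(M+1)) - 1) ^ (mdeg S kp.1) *
        ∏ k ∈ (S.image Prod.fst).erase kp.1, (x ^ (2*(n+(k+2))) - 1) ^ (mdeg S k))
      = c kp * (((x ^ M - x ^ (-M)) / (x ^ (M+1) - x ^ (-(M+1)))) ^ kp.2 *
          (x ^ (2*(M+1)) - 1) ^ (mdeg S kp.1)) *
        ∏ k ∈ (S.image Prod.fst).erase kp.1, (x ^ (2*(n+(k+2))) - 1) ^ (mdeg S k)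
    from by ring]
  rw [ratio_pow hx0 hx1 M hM kp.2 (mdeg S kp.1) (le_mdeg hkp)]
  ring


lemma auxQ_extract (hx0 : x ≠ 0) (hx1 : ∀ m : ℤ, m ≠ 0 → x ^ m ≠ 1)
    {c₀ : F} {S : Finset (ℤ × ℕ)} {c : ℤ × ℕ → F}
    (hp : ∀ kp ∈ S, 1 ≤ kp.2)
    (hQ : auxQ x c₀ S c = 0) {kq : ℤ × ℕ} (hmem : kq ∈ S)
    (hmax : kq.2 = mdeg S kq.1) : c kq = 0 := by
  have hkT : kq.1 ∈ S.image Prod.fst := Finset.mem_image.2 ⟨kq, hmem, rfl⟩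
  have hev := congrArg (Polynomial.eval (x ^ (-(2*(kq.1+2))))) hQ
  have hw : ∀ j : ℤ, x ^ (2*j) * x ^ (-(2*(kq.1+2))) = x ^ (2*(j - (kq.1+2))) := fun j => by
    rw [← zpow_add₀ hx0]; congr 1; ring
  simp only [auxQ, eval_add, eval_mul, eval_pow, eval_sub, eval_one, eval_C, eval_X,
    eval_prod, eval_finset_sum, eval_zero, hw] at hev
  -- the factor at k = kq.1 vanishes
  have hfac0 : ∀ k : ℤ, k = kq.1 → ∀ e : ℕ, 1 ≤ e → (x ^ (2*(k+2 - (kq.1+2))) - 1) ^ e = 0 := by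
    intro k hk e he
    rw [hk, show 2*(kq.1+2 - (kq.1+2)) = 0 from by ring, zpow_zero, sub_self,
      zero_pow (by omega)]
  have hm1 : 1 ≤ mdeg S kq.1 := le_trans (hp kq hmem) (le_mdeg hmem)
  have hprod0 : (∏ k ∈ S.image Prod.fst, (x ^ (2*(k+2 - (kq.1+2))) - 1) ^ (mdeg S k)) = 0 :=
    Finset.prod_eq_zero hkT (hfac0 _ rfl _ hm1)
  rw [hprod0, mul_zero, zero_add] at hev
  rw [Finset.sum_eq_single_of_mem kq hmem ?hother] at hev
  -- remaining term
  rw [hmax, Nat.sub_self, pow_zero, mul_one] at hev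
  have hA : (x ^ (2*(kq.1+1 - (kq.1+2))) - 1) ^ (mdeg S kq.1) ≠ 0 := by
    apply pow_ne_zero
    apply sub_ne_zero.2
    exact hx1 _ (by omega)
  have hPi : (∏ k ∈ (S.image Prod.fst).erase kq.1,
      (x ^ (2*(k+2 - (kq.1+2))) - 1) ^ (mdeg S k)) ≠ 0 := by
    apply Finset.prod_ne_zero_iff.2
    intro k hk
    apply pow_ne_zero
    apply sub_ne_zero.2
    apply hx1
    have : k ≠ kq.1 := (Finset.mem_erase.1 hk).1
    omega
  have hxp : (x : F) ^ (mdeg S kq.1) ≠ 0 := pow_ne_zero _ hx0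
  rcases mul_eq_zero.mp hev with h | h
  · exact (mul_eq_zero.mp h).resolve_right hxp
  · rcases mul_eq_zero.mp h with h2 | h2
    · exact absurd h2 hA
    · exact absurd h2 hPi
  case hother =>
    intro b hb hne
    by_cases hb1 : b.1 = kq.1
    · have hb2 : b.2 < mdeg S b.1 := by
        have hle : b.2 ≤ mdeg S b.1 := le_mdeg hb
        rcases lt_or_eq_of_le hle with h | h
        · exact h
        · exfalso; exact hne (Prod.ext hb1 (by rw [h, hb1, ← hmax]))
      rw [show (x ^ (2*(b.1+2 - (kq.1+2))) - 1) ^ (mdeg S b.1 - b.2) = 0 from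
        hfac0 _ hb1 _ (by omega)]
      ring
    · have hkq_mem : kq.1 ∈ (S.image Prod.fst).erase b.1 :=
        Finset.mem_erase.2 ⟨fun h => hb1 h.symm, hkT⟩
      rw [Finset.prod_eq_zero hkq_mem (hfac0 _ rfl _ hm1)]
      ring

end BoxAux

open LaurentPolynomial

noncomputable section


noncomputable def laurentToRatFunc : LaurentPolynomial ℂ →ₐ[ℂ] RatFunc ℂ :=
  AddMonoidAlgebra.lift ℂ (RatFunc ℂ) ℤ
    { toFun := fun n => (RatFunc.X : RatFunc ℂ) ^ (Multiplicative.toAdd n)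
      map_one' := by simp
      map_mul' := fun a b => by
        simp only [toAdd_mul]
        exact zpow_add₀ RatFunc.X_ne_zero _ _ }

lemma la_T (m : ℤ) : laurentToRatFunc (T m) = (RatFunc.X : RatFunc ℂ) ^ m := by
  rw [laurentToRatFunc, T]
  rw [AddMonoidAlgebra.lift_single]
  simp

lemma la_toLaurent (f : Polynomial ℂ) :
    laurentToRatFunc f.toLaurent = algebraMap (Polynomial ℂ) (RatFunc ℂ) f := by
  have : laurentToRatFunc.comp (Polynomial.toLaurentAlg (R := ℂ)) =
      (IsScalarTower.toAlgHom ℂ (Polynomial ℂ) (RatFunc ℂ)) := by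
    apply Polynomial.algHom_ext
    simp [Polynomial.toLaurentAlg, la_T, RatFunc.algebraMap_X]
  exact congrFun (congrArg (fun g => g.toFun) this) f

lemma la_injective : Function.Injective laurentToRatFunc := by
  intro f g hfg
  rw [← sub_eq_zero] at hfg ⊢
  rw [← map_sub] at hfg
  set d := f - g with hd
  obtain ⟨n, f', hf'⟩ := d.exists_T_pow
  have h2 : laurentToRatFunc (d * T n) = 0 := by
    rw [map_mul, hfg, zero_mul]
  rw [← hf', la_toLaurent] at h2
  have hf0 : f' = 0 := (map_eq_zero_iff _ (RatFunc.algebraMap_injective ℂ)).mp h2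
  have h3 : d * T (n:ℤ) = 0 := by rw [← hf', hf0, map_zero]
  exact ((isUnit_T (n:ℤ)).mul_left_eq_zero).mp h3

lemma X_zpow_ne_one {m : ℤ} (hm : m ≠ 0) : (RatFunc.X : RatFunc ℂ) ^ m ≠ 1 := by
  intro h
  have h1 : laurentToRatFunc (T m) = laurentToRatFunc (T 0) := by
    rw [la_T, la_T, h]; simp
  have h2 := la_injective h1
  apply hm
  have h3 : (T m : LaurentPolynomial ℂ).coeff m = (T 0 : LaurentPolynomial ℂ).coeff m := by rw [h2]
  rw [T_apply, T_apply, if_pos rfl] at h3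
  by_cases h0 : (0:ℤ) = m
  · exact h0.symm
  · rw [if_neg h0] at h3; exact absurd h3 one_ne_zero

lemma X_zpow_injective : Function.Injective (fun m : ℤ => (RatFunc.X : RatFunc ℂ) ^ m) := by
  intro p q h
  by_contra hne
  apply X_zpow_ne_one (sub_ne_zero.2 hne)
  simp only at h
  rw [zpow_sub₀ RatFunc.X_ne_zero, h, div_self (zpow_ne_zero _ RatFunc.X_ne_zero)]

/-- Linear independence step of Proposition 6.8: if a finitely supported
`ℂ[q,q⁻¹]`-linear combination `a₀ + ∑_{k,p} a_{k,p} ([n+k+1]/[n+k+2])^p` (with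
`a_{k,p} = 0` unless `k ≥ r` and `p ≥ 1`) vanishes in `ℂ(X)` for all `n ≥ -(r+1)`,
then all the coefficients vanish. -/
theorem box_powers_linearIndependent (r : ℤ)
    (a₀ : LaurentPolynomial ℂ) (a : ℤ × ℕ →₀ LaurentPolynomial ℂ)
    (ha : ∀ k : ℤ, ∀ p : ℕ, a (k, p) ≠ 0 → r ≤ k ∧ 1 ≤ p)
    (h : ∀ n : ℤ, -(r + 1) ≤ n →
      laurentToRatFunc a₀ +
        ∑ kp ∈ a.support, laurentToRatFunc (a kp) *
          (((RatFunc.X : RatFunc ℂ) ^ (n + kp.1 + 1) - RatFunc.X ^ (-(n + kp.1 + 1))) /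
            ((RatFunc.X : RatFunc ℂ) ^ (n + kp.1 + 2) - RatFunc.X ^ (-(n + kp.1 + 2)))) ^ kp.2
        = 0) :
    a₀ = 0 ∧ a = 0 := by
  have hx0 : (RatFunc.X : RatFunc ℂ) ≠ 0 := RatFunc.X_ne_zero
  have hx1 : ∀ m : ℤ, m ≠ 0 → (RatFunc.X : RatFunc ℂ) ^ m ≠ 1 := fun m hm => X_zpow_ne_one hm
  have hmemS : ∀ kp : ℤ × ℕ, kp ∈ a.support → a kp ≠ 0 := fun kp hkp =>
    Finsupp.mem_support_iff.1 hkp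
  have hrk : ∀ kp : ℤ × ℕ, kp ∈ a.support → r ≤ kp.1 ∧ 1 ≤ kp.2 := by
    intro kp hkp
    have := hmemS kp hkp
    exact ha kp.1 kp.2 (by rwa [Prod.mk.eta])
  have hroot : ∀ n : ℤ, -(r+1) ≤ n →
      (BoxAux.auxQ RatFunc.X (laurentToRatFunc a₀) a.support
        (fun kp => laurentToRatFunc (a kp))).eval ((RatFunc.X : RatFunc ℂ) ^ (2*n)) = 0 := by
    intro n hn
    rw [BoxAux.auxQ_eval hx0 hx1 _ _ _ n (fun kp hkp => by have := (hrk kp hkp).1; omega)]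
    beta_reduce
    rw [h n hn, zero_mul]
  have hQ0 : BoxAux.auxQ RatFunc.X (laurentToRatFunc a₀) a.support
      (fun kp => laurentToRatFunc (a kp)) = 0 := by
    apply Polynomial.eq_zero_of_infinite_isRoot
    apply Set.Infinite.mono (s := (fun n : ℤ => (RatFunc.X : RatFunc ℂ) ^ (2*n)) ''
      (Set.Ici (-(r+1))))
    · rintro z ⟨n, hn, rfl⟩
      exact hroot n hn
    · apply Set.Infinite.image ?_ (Set.Ici_infinite _)
      intro p hp q hq hpq
      have h2 : (2:ℤ)*p = 2*q := X_zpow_injective hpq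
      omega
  have hp1 : ∀ kp ∈ a.support, 1 ≤ kp.2 := fun kp hkp => (hrk kp hkp).2
  have hA : a = 0 := by
    by_contra hne
    obtain ⟨kp₀, hkp₀⟩ := Finsupp.support_nonempty_iff.2 hne
    have hfil : ((a.support).filter (fun kp => kp.1 = kp₀.1)).Nonempty :=
      ⟨kp₀, Finset.mem_filter.2 ⟨hkp₀, rfl⟩⟩
    obtain ⟨kq, hkqmem, hkq⟩ := Finset.exists_mem_eq_sup _ hfil Prod.snd
    have hkqS : kq ∈ a.support := (Finset.mem_filter.1 hkqmem).1
    have hkq1 : kq.1 = kp₀.1 := (Finset.mem_filter.1 hkqmem).2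
    have hmax : kq.2 = BoxAux.mdeg a.support kq.1 := by
      rw [BoxAux.mdeg, hkq1]
      exact hkq.symm
    have hc0 := BoxAux.auxQ_extract hx0 hx1 hp1 hQ0 hkqS hmax
    exact (hmemS kq hkqS) (la_injective (by rw [hc0, map_zero]))
  refine ⟨?_, hA⟩
  have h0 := h (-(r+1)) le_rfl
  rw [hA] at h0
  simp only [Finsupp.support_zero, Finset.sum_empty, add_zero] at h0
  exact la_injective (by rw [h0, map_zero])

end
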